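/- For any compact metric space X (with Hausdorff distance D on compact sets), the map σ ↦ w_α(σ) is 'upper semicontinuous': if σ_j → σ in U^{ℓ+1}_α, then sup_{x ∈ w_α(σ_j)} d(x, w_α(σ)) → 0. -/

import Mathlib

/-- The closed `α`-neighborhood of the diagonal in `X^n`. -/
def diagNbhd {X : Type*} [MetricSpace X] (α : ℝ) (n : ℕ) :
    Set (Fin n → X) :=
  {x | ∃ t : X, ∀ i, dist (x i) t ≤ α}

/-- The witness set `w_α(σ) = ⋂ᵢ B̄_α(σᵢ)`. -/
def witnessSet {X : Type*} [MetricSpace X] (α : ℝ) {n : ℕ}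
    (σ : Fin n → X) : Set X :=
  ⋂ i, Metric.closedBall (σ i) α

/-- on any compact metric space the witness map is upper
semicontinuous: if `σ_j → σ₀` in `U^{ℓ+1}_α`, then
`sup_{x ∈ w_α(σ_j)} d(x, w_α(σ₀)) → 0`. -/
theorem witness_upper_semicontinuous
    {X : Type*} [MetricSpace X] [CompactSpace X]
    (α : ℝ) (ℓ : ℕ) (σ : ℕ → Fin (ℓ + 1) → X) (σ₀ : Fin (ℓ + 1) → X)
    (hmem : ∀ j, σ j ∈ diagNbhd α (ℓ + 1)) (h0 : σ₀ ∈ diagNbhd α (ℓ + 1))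
    (hconv : Filter.Tendsto σ Filter.atTop (nhds σ₀)) :
    Filter.Tendsto
      (fun j => ⨆ x ∈ witnessSet α (σ j), Metric.infDist x (witnessSet α σ₀))
      Filter.atTop (nhds 0) := by
  haveI : Nonempty X := ⟨σ₀ 0⟩
  set W : Set X := witnessSet α σ₀ with hW
  set f : ℕ → ℝ := fun j => ⨆ x ∈ witnessSet α (σ j), Metric.infDist x W with hf
  have hinner : ∀ (S : Set X) (x : X), (0:ℝ) ≤ ⨆ _ : x ∈ S, Metric.infDist x W := by
    intro S x
    exact Real.iSup_nonneg (fun _ => Metric.infDist_nonneg)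
  have hfnonneg : ∀ j, 0 ≤ f j := fun j =>
    Real.iSup_nonneg (fun x => hinner _ x)
  rw [NormedAddCommGroup.tendsto_nhds_zero]
  by_contra hcon
  push_neg at hcon
  obtain ⟨ε, hε, hfreq⟩ := hcon
  simp only [← not_lt] at hfreq
  have hfreq' : ∃ᶠ j in Filter.atTop, ε ≤ f j := by
    refine hfreq.mono fun j hj => ?_
    rw [Real.norm_eq_abs, abs_of_nonneg (hfnonneg j)] at hj
    linarith [not_lt.mp hj]
  obtain ⟨φ, hφ, hφε⟩ := Filter.extraction_of_frequently_atTop hfreq'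
  -- pick witnesses with infDist > ε/2
  have hx : ∀ k, ∃ x ∈ witnessSet α (σ (φ k)), ε / 2 < Metric.infDist x W := by
    intro k
    have h1 : ε / 2 < f (φ k) := lt_of_lt_of_le (by linarith) (hφε k)
    obtain ⟨x, hx⟩ := exists_lt_of_lt_ciSup h1
    by_cases hxS : x ∈ witnessSet α (σ (φ k))
    · refine ⟨x, hxS, ?_⟩
      rwa [ciSup_pos hxS] at hx
    · exfalso
      haveI : IsEmpty (x ∈ witnessSet α (σ (φ k))) := ⟨hxS⟩
      rw [Real.iSup_of_isEmpty] at hx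
      · linarith
  choose x hxmem hxdist using hx
  obtain ⟨a, -, ψ, hψ, hψconv⟩ :=
    isCompact_univ.tendsto_subseq (x := x) (fun n => Set.mem_univ (x n))
  -- σ (φ (ψ n)) → σ₀
  have hσconv : Filter.Tendsto (fun n => σ (φ (ψ n))) Filter.atTop (nhds σ₀) :=
    hconv.comp ((hφ.comp hψ).tendsto_atTop)
  -- a ∈ W
  have haW : a ∈ W := by
    rw [hW, witnessSet, Set.mem_iInter]
    intro i
    rw [Metric.mem_closedBall]
    have hd : Filter.Tendsto (fun n => dist (x (ψ n)) (σ (φ (ψ n)) i))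
        Filter.atTop (nhds (dist a (σ₀ i))) := by
      exact Filter.Tendsto.dist hψconv
        (((tendsto_pi_nhds.mp hσconv) i))
    refine le_of_tendsto hd (Filter.Eventually.of_forall fun n => ?_)
    have := hxmem (ψ n)
    rw [witnessSet, Set.mem_iInter] at this
    exact Metric.mem_closedBall.mp (this i)
  -- contradiction
  have h0' : Filter.Tendsto (fun n => Metric.infDist (x (ψ n)) W)
      Filter.atTop (nhds 0) := by
    have := (Metric.continuous_infDist_pt W).continuousAt.tendsto.comp hψconv
    rwa [Metric.infDist_zero_of_mem haW] at this
  have : ε / 2 ≤ 0 :=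
    ge_of_tendsto h0' (Filter.Eventually.of_forall fun n => (hxdist (ψ n)).le)
  linarith
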